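/- arXiv:1610.02522 — 5 statements merged into one kernel-verified Lean document; each statement's English description precedes it below -/
import Mathlib

section
/- If a Tychonoff space X contains a countable family {F_n} of closed subsets which is compact-finite but not locally finite, and each F_n admits a functional neighborhood U_n such that the family {U_n} is compact-finite, then X is not a k_R-space. -/
open Set Filter Topology Cardinal

/-- A `k`-space: a set is closed whenever its trace on every compact subset is closed. -/
def IsKSpace (X : Type*) [TopologicalSpace X] : Prop :=
  ∀ C : Set X, (∀ K : Set X, IsCompact K → IsClosed (Subtype.val ⁻¹' C : Set K)) → IsClosed C

/-- A `k_R`-space: every real-valued function which is continuous on each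
compact subset is continuous. -/
def IsKRSpace (X : Type*) [TopologicalSpace X] : Prop :=
  ∀ f : X → ℝ, (∀ K : Set X, IsCompact K → ContinuousOn f K) → Continuous f

/-- A Tychonoff space containing a strict `Cld^ω`-fan (a compact-finite but not
locally finite countable family of closed sets, each with a functional neighborhood
such that the family of these neighborhoods is compact-finite) is not a `k_R`-space. -/
theorem not_isKRSpace_of_strict_cld_fan (X : Type*) [TopologicalSpace X] [T35Space X]
    (F U : ℕ → Set X)
    (hFcl : ∀ n, IsClosed (F n))
    (hFcf : ∀ K : Set X, IsCompact K → {n : ℕ | (F n ∩ K).Nonempty}.Finite)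
    (hnlf : ¬ ∀ x : X, ∃ V ∈ 𝓝 x, {n : ℕ | (F n ∩ V).Nonempty}.Finite)
    (hfun : ∀ n, ∃ f : X → ℝ, Continuous f ∧ (∀ y, f y ∈ Set.Icc (0 : ℝ) 1) ∧
      (∀ y ∈ F n, f y = 1) ∧ (∀ y ∉ U n, f y = 0))
    (hUcf : ∀ K : Set X, IsCompact K → {n : ℕ | (U n ∩ K).Nonempty}.Finite) :
    ¬ IsKRSpace X := by
  intro hKR
  choose f hfc hf01 hfF hfU using hfun
  -- each point lies in only finitely many U n
  have hnn : ∀ (n : ℕ) (x : X), 0 ≤ (n : ℝ) * f n x := fun n x =>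
    mul_nonneg (Nat.cast_nonneg n) (hf01 n x).1
  have hsupp : ∀ x : X, (Function.support fun n : ℕ => (n : ℝ) * f n x).Finite := by
    intro x
    apply (hUcf {x} isCompact_singleton).subset
    intro n hn
    by_contra hx
    have : x ∉ U n := fun h => hx ⟨x, h, rfl⟩
    simp [hfU n x this] at hn
  have hsum : ∀ x : X, Summable fun n : ℕ => (n : ℝ) * f n x := fun x =>
    summable_of_finite_support (hsupp x)
  set g : X → ℝ := fun x => ∑' n : ℕ, (n : ℝ) * f n x with hg
  have hcg : Continuous g := by
    apply hKR
    intro K hK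
    set S := (hUcf K hK).toFinset with hS
    have heq : ∀ x ∈ K, g x = ∑ n ∈ S, (n : ℝ) * f n x := by
      intro x hx
      apply tsum_eq_sum
      intro n hn
      have : x ∉ U n := by
        intro hxU
        exact hn ((hUcf K hK).mem_toFinset.mpr ⟨x, hxU, hx⟩)
      simp [hfU n x this]
    have : ContinuousOn (fun x => ∑ n ∈ S, (n : ℝ) * f n x) K :=
      (continuous_finset_sum S fun n _ => (continuous_const.mul (hfc n))).continuousOn
    exact this.congr heq
  push_neg at hnlf
  obtain ⟨x, hx⟩ := hnlf
  have hV : g ⁻¹' (Iio (g x + 1)) ∈ 𝓝 x :=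
    hcg.continuousAt.preimage_mem_nhds (Iio_mem_nhds (by linarith))
  have hinf : {n : ℕ | (F n ∩ g ⁻¹' (Iio (g x + 1))).Nonempty}.Infinite := hx _ hV
  obtain ⟨n, hn, hngt⟩ := hinf.exists_gt ⌈g x + 1⌉₊
  obtain ⟨y, hyF, hyV⟩ := hn
  have h1 : g y < g x + 1 := hyV
  have h2 : (n : ℝ) * f n y ≤ g y := Summable.le_tsum (hsum y) n fun m _ => hnn m y
  rw [hfF n y hyF, mul_one] at h2
  have h3 : g x + 1 ≤ (n : ℝ) := le_trans (Nat.le_ceil _) (by exact_mod_cast hngt.le)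
  linarith
end

section
/- There exist families {A_α : α < ω₁} and {B_α : α < ω₁} of infinite subsets of ω such that (a) A_α ∩ B_β is finite for all α, β < ω₁, and (b) there is no set A ⊆ ω such that all the sets A_α \ A and B_α ∩ A for α < ω₁ are finite. -/
open Set Filter Topology Cardinal

namespace LuzinGap

/-- The almost-disjointness invariant for a family of pairs. -/
def Inv (fam : Set (Set ℕ × Set ℕ)) : Prop :=
  (∀ p ∈ fam, p.1.Infinite ∧ p.2.Infinite ∧ (p.1 ∩ p.2).Finite) ∧
  (∀ p ∈ fam, ∀ q ∈ fam, p ≠ q → ((p.1 ∪ p.2) ∩ (q.1 ∪ q.2)).Finite)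

/-- What the recursion step produces. -/
def StepProp (fam : Set (Set ℕ × Set ℕ)) (p : Set ℕ × Set ℕ) : Prop :=
  p ∉ fam ∧ Inv (insert p fam) ∧
  ∀ n : ℕ, {q ∈ fam | (p.1 ∩ q.2) ∪ (p.2 ∩ q.1) ⊆ Set.Iio n}.Finite

lemma exists_step (fam : Set (Set ℕ × Set ℕ)) (hc : fam.Countable) (hi : fam.Infinite)
    (hInv : Inv fam) : ∃ p, StepProp fam p := by
  haveI := hc.to_subtype
  haveI := hi.to_subtype
  obtain ⟨dd⟩ := nonempty_denumerable (↥fam)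
  let e : ℕ ≃ ↥fam := (Denumerable.eqv ↥fam).symm
  let C : ℕ → Set ℕ := fun k => (e k : Set ℕ × Set ℕ).1
  let D : ℕ → Set ℕ := fun k => (e k : Set ℕ × Set ℕ).2
  have hmem : ∀ k, (e k : Set ℕ × Set ℕ) ∈ fam := fun k => (e k).2
  have hCinf : ∀ k, (C k).Infinite := fun k => (hInv.1 _ (hmem k)).1
  have hDinf : ∀ k, (D k).Infinite := fun k => (hInv.1 _ (hmem k)).2.1
  have hCD : ∀ k, (C k ∩ D k).Finite := fun k => (hInv.1 _ (hmem k)).2.2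
  have had : ∀ j k, j ≠ k → ((C j ∪ D j) ∩ (C k ∪ D k)).Finite := fun j k hjk =>
    hInv.2 _ (hmem j) _ (hmem k) (fun h => hjk (e.injective (Subtype.ext h)))
  -- the one-step pick
  have key : ∀ k prev : ℕ, ∃ b a : ℕ,
      prev < b ∧ b < a ∧ k ≤ b ∧ b ∈ C k ∧ a ∈ D k ∧ b ∉ D k ∧ a ∉ C k ∧
      ∀ j, j < k → b ∉ C j ∧ b ∉ D j ∧ a ∉ C j ∧ a ∉ D j := by
    intro k prev
    have hjunk : ((C k ∩ D k) ∪ ⋃ j ∈ Set.Iio k, ((C k ∪ D k) ∩ (C j ∪ D j))).Finite :=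
      (hCD k).union (Set.Finite.biUnion (Set.finite_Iio k)
        fun j hj => had k j (Nat.ne_of_gt hj))
    obtain ⟨b, hbmem, hbgt⟩ := ((hCinf k).diff hjunk).exists_gt (max prev k)
    obtain ⟨a, hamem, hagt⟩ := ((hDinf k).diff hjunk).exists_gt b
    refine ⟨b, a, lt_of_le_of_lt (le_max_left _ _) hbgt, hagt,
      le_of_lt (lt_of_le_of_lt (le_max_right _ _) hbgt), hbmem.1, hamem.1, ?_, ?_, ?_⟩
    · intro h; exact hbmem.2 (Or.inl ⟨hbmem.1, h⟩)
    · intro h; exact hamem.2 (Or.inl ⟨h, hamem.1⟩)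
    · intro j hj
      refine ⟨?_, ?_, ?_, ?_⟩
      · intro h; exact hbmem.2 (Or.inr (Set.mem_biUnion hj ⟨Or.inl hbmem.1, Or.inl h⟩))
      · intro h; exact hbmem.2 (Or.inr (Set.mem_biUnion hj ⟨Or.inl hbmem.1, Or.inr h⟩))
      · intro h; exact hamem.2 (Or.inr (Set.mem_biUnion hj ⟨Or.inr hamem.1, Or.inl h⟩))
      · intro h; exact hamem.2 (Or.inr (Set.mem_biUnion hj ⟨Or.inr hamem.1, Or.inr h⟩))
  choose bf af h1 h2 h3 h4 h5 h6 h7 h8 using key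
  let pr : ℕ → ℕ := fun k => Nat.rec 0 (fun m ih => af m ih) k
  let b : ℕ → ℕ := fun k => bf k (pr k)
  let a : ℕ → ℕ := fun k => af k (pr k)
  have hprb : ∀ k, pr k < b k := fun k => h1 k (pr k)
  have hba : ∀ k, b k < a k := fun k => h2 k (pr k)
  have hkb : ∀ k, k ≤ b k := fun k => h3 k (pr k)
  have hbC : ∀ k, b k ∈ C k := fun k => h4 k (pr k)
  have haD : ∀ k, a k ∈ D k := fun k => h5 k (pr k)
  have havoid : ∀ k j, j < k → a k ∉ C j ∧ a k ∉ D j ∧ b k ∉ C j ∧ b k ∉ D j := by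
    intro k j hj
    obtain ⟨x1, x2, x3, x4⟩ := h8 k (pr k) j hj
    exact ⟨x3, x4, x1, x2⟩
  have hpr_succ : ∀ k, pr (k + 1) = a k := fun k => rfl
  have hchain : ∀ k, a k < b (k + 1) := fun k => by
    have := hprb (k + 1); rwa [hpr_succ k] at this
  have hbmono : StrictMono b := strictMono_nat_of_lt_succ fun k => (hba k).trans (hchain k)
  have hamono : StrictMono a := strictMono_nat_of_lt_succ fun k => (hchain k).trans (hba (k + 1))
  have hab : ∀ j k, a j < b k ∨ b k < a j := by
    intro j k
    rcases lt_or_ge j k with h | h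
    · exact Or.inl ((hchain j).trans_le (hbmono.monotone h))
    · exact Or.inr ((hbmono.monotone h).trans_lt (hba j))
  set A : Set ℕ := Set.range a with hA
  set B : Set ℕ := Set.range b with hB
  have hAinf : A.Infinite := Set.infinite_range_of_injective hamono.injective
  have hBinf : B.Infinite := Set.infinite_range_of_injective hbmono.injective
  have hABdisj : A ∩ B = ∅ := by
    ext x
    simp only [Set.mem_inter_iff, hA, hB, Set.mem_range, Set.mem_empty_iff_false, iff_false]
    rintro ⟨⟨j, rfl⟩, ⟨k, hk⟩⟩
    rcases hab j k with h | h <;> omega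
  have hnew : ∀ k, (A ∪ B) ∩ (C k ∪ D k) ⊆ (a '' Set.Iic k) ∪ (b '' Set.Iic k) := by
    intro k x hx
    obtain ⟨hx1, hx2⟩ := hx
    rcases hx1 with hx1 | hx1
    · obtain ⟨j, rfl⟩ := hx1
      refine Or.inl ⟨j, ?_, rfl⟩
      by_contra h
      rw [Set.mem_Iic, not_le] at h
      rcases hx2 with h' | h'
      · exact (havoid j k h).1 h'
      · exact (havoid j k h).2.1 h'
    · obtain ⟨j, rfl⟩ := hx1
      refine Or.inr ⟨j, ?_, rfl⟩
      by_contra h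
      rw [Set.mem_Iic, not_le] at h
      rcases hx2 with h' | h'
      · exact (havoid j k h).2.2.1 h'
      · exact (havoid j k h).2.2.2 h'
  have hnewfin : ∀ q ∈ fam, ((A ∪ B) ∩ (q.1 ∪ q.2)).Finite := by
    intro q hq
    have hek : e (e.symm ⟨q, hq⟩) = ⟨q, hq⟩ := e.apply_symm_apply _
    have hC' : C (e.symm ⟨q, hq⟩) = q.1 :=
      congrArg (fun s : ↥fam => (s : Set ℕ × Set ℕ).1) hek
    have hD' : D (e.symm ⟨q, hq⟩) = q.2 :=
      congrArg (fun s : ↥fam => (s : Set ℕ × Set ℕ).2) hek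
    rw [← hC', ← hD']
    exact Set.Finite.subset (((Set.finite_Iic _).image a).union ((Set.finite_Iic _).image b))
      (hnew _)
  refine ⟨(A, B), ?_, ⟨?_, ?_⟩, ?_⟩
  · -- (A, B) ∉ fam
    intro h
    have hek : e (e.symm ⟨(A, B), h⟩) = ⟨(A, B), h⟩ := e.apply_symm_apply _
    have hC' : C (e.symm ⟨(A, B), h⟩) = A :=
      congrArg (fun s : ↥fam => (s : Set ℕ × Set ℕ).1) hek
    refine hAinf (Set.Finite.subset (hnewfin (A, B) h) ?_)
    intro x hx
    exact ⟨Or.inl hx, Or.inl hx⟩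
  · -- unary part of Inv
    rintro p (rfl | hp)
    · exact ⟨hAinf, hBinf, by rw [show (A, B).1 ∩ (A, B).2 = A ∩ B from rfl, hABdisj]; exact Set.finite_empty⟩
    · exact hInv.1 p hp
  · -- binary part of Inv
    rintro p (rfl | hp) q (rfl | hq) hne
    · exact absurd rfl hne
    · exact hnewfin q hq
    · rw [Set.inter_comm]; exact hnewfin p hp
    · exact hInv.2 p hp q hq hne
  · -- Luzin property
    intro n
    refine Set.Finite.subset ((Set.finite_Iio n).image (fun k => (e k : Set ℕ × Set ℕ))) ?_
    rintro q ⟨hq, hsub⟩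
    have hek : e (e.symm ⟨q, hq⟩) = ⟨q, hq⟩ := e.apply_symm_apply _
    have hC' : C (e.symm ⟨q, hq⟩) = q.1 :=
      congrArg (fun s : ↥fam => (s : Set ℕ × Set ℕ).1) hek
    set k := e.symm ⟨q, hq⟩ with hkdef
    have hbk : b k ∈ B ∩ q.1 := ⟨⟨k, rfl⟩, by rw [← hC']; exact hbC k⟩
    have hlt : b k < n := hsub (Or.inr hbk)
    exact ⟨k, lt_of_le_of_lt (hkb k) hlt, congrArg Subtype.val hek⟩


/-! ### The seed family -/

lemma rg_injective (m : ℕ) : Function.Injective (Nat.pair m) :=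
  fun x y h => (Nat.pair_eq_pair.mp h).2

lemma rg_infinite (m : ℕ) : (Set.range (Nat.pair m)).Infinite :=
  Set.infinite_range_of_injective (rg_injective m)

lemma rg_disj {m m' : ℕ} (h : m ≠ m') :
    Set.range (Nat.pair m) ∩ Set.range (Nat.pair m') = ∅ := by
  ext x
  simp only [Set.mem_inter_iff, Set.mem_range, Set.mem_empty_iff_false, iff_false]
  rintro ⟨⟨u, rfl⟩, ⟨v, hv⟩⟩
  exact h ((Nat.pair_eq_pair.mp hv).1).symm

def seedFun : ℕ → Set ℕ × Set ℕ :=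
  fun n => (Set.range (Nat.pair (2 * n)), Set.range (Nat.pair (2 * n + 1)))

def seedSet : Set (Set ℕ × Set ℕ) := Set.range seedFun

lemma seed_inj : Function.Injective seedFun := by
  intro n m h
  have h1 : Set.range (Nat.pair (2 * n)) = Set.range (Nat.pair (2 * m)) :=
    congrArg Prod.fst h
  have h2 : Nat.pair (2 * n) 0 ∈ Set.range (Nat.pair (2 * m)) := by
    rw [← h1]; exact ⟨0, rfl⟩
  obtain ⟨v, hv⟩ := h2
  have := (Nat.pair_eq_pair.mp hv).1
  omega

lemma seed_infinite : seedSet.Infinite := Set.infinite_range_of_injective seed_inj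

lemma seed_countable : seedSet.Countable := Set.countable_range _

lemma inv_seed : Inv seedSet := by
  constructor
  · rintro p ⟨n, rfl⟩
    exact ⟨rg_infinite _, rg_infinite _, by
      rw [show (seedFun n).1 ∩ (seedFun n).2 =
        Set.range (Nat.pair (2 * n)) ∩ Set.range (Nat.pair (2 * n + 1)) from rfl,
        rg_disj (by omega)]; exact Set.finite_empty⟩
  · rintro p ⟨n, rfl⟩ q ⟨m, rfl⟩ hne
    have hnm : n ≠ m := fun h => hne (congrArg seedFun h)
    have hz : ((seedFun n).1 ∪ (seedFun n).2) ∩ ((seedFun m).1 ∪ (seedFun m).2) = ∅ := by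
      ext x
      simp only [seedFun, Set.mem_inter_iff, Set.mem_union, Set.mem_range,
        Set.mem_empty_iff_false, iff_false]
      rintro ⟨h1 | h1, h2 | h2⟩ <;>
        (obtain ⟨u, rfl⟩ := h1; obtain ⟨v, hv⟩ := h2;
         have := (Nat.pair_eq_pair.mp hv).1; omega)
    rw [hz]; exact Set.finite_empty

/-! ### The transfinite recursion -/

open scoped Classical in
noncomputable def nextPair (fam : Set (Set ℕ × Set ℕ)) : Set ℕ × Set ℕ :=
  if h : fam.Countable ∧ fam.Infinite ∧ Inv fam then
    (exists_step fam h.1 h.2.1 h.2.2).choose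
  else (∅, ∅)

lemma nextPair_spec {fam : Set (Set ℕ × Set ℕ)} (h1 : fam.Countable) (h2 : fam.Infinite)
    (h3 : Inv fam) : StepProp fam (nextPair fam) := by
  unfold nextPair
  rw [dif_pos ⟨h1, h2, h3⟩]
  exact (exists_step fam h1 h2 h3).choose_spec

noncomputable def F : (aleph 1).ord.ToType → Set ℕ × Set ℕ :=
  WellFoundedLT.fix fun α ih =>
    nextPair (seedSet ∪ {p | ∃ β, ∃ h : β < α, ih β h = p})

noncomputable def famAt (α : (aleph 1).ord.ToType) : Set (Set ℕ × Set ℕ) :=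
  seedSet ∪ (F '' Set.Iio α)

lemma F_eq (α : (aleph 1).ord.ToType) : F α = nextPair (famAt α) := by
  have h2 : famAt α = seedSet ∪ {p | ∃ β, ∃ _ : β < α, F β = p} := by
    unfold famAt
    congr 1
    ext p
    simp only [Set.mem_image, Set.mem_Iio, Set.mem_setOf_eq]
    exact ⟨fun ⟨β, ha, hb⟩ => ⟨β, ha, hb⟩, fun ⟨β, ha, hb⟩ => ⟨β, ha, hb⟩⟩
  rw [h2]
  exact WellFoundedLT.fix_eq _ α

lemma countable_Iio (α : (aleph 1).ord.ToType) : (Set.Iio α).Countable :=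
  (Cardinal.countable_iff_lt_aleph_one _).mpr (Cardinal.mk_Iio_ord_toType α)

lemma famAt_c (α : (aleph 1).ord.ToType) : (famAt α).Countable :=
  seed_countable.union ((countable_Iio α).image F)

lemma famAt_i (α : (aleph 1).ord.ToType) : (famAt α).Infinite :=
  Set.Infinite.mono Set.subset_union_left seed_infinite

lemma famAt_inv : ∀ α, Inv (famAt α) := by
  intro α
  refine WellFoundedLT.induction (motive := fun α => Inv (famAt α)) α ?_
  intro α ih
  have hstep : ∀ β, β < α → StepProp (famAt β) (F β) := fun β hβ => by
    rw [F_eq β]; exact nextPair_spec (famAt_c β) (famAt_i β) (ih β hβ)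
  constructor
  · rintro p (hp | ⟨β, hβ, rfl⟩)
    · exact inv_seed.1 p hp
    · exact (hstep β hβ).2.1.1 _ (Set.mem_insert _ _)
  · rintro p (hp | ⟨β, hβ, rfl⟩) q (hq | ⟨γ, hγ, rfl⟩) hne
    · exact inv_seed.2 p hp q hq hne
    · exact (hstep γ hγ).2.1.2 p
        (Set.mem_insert_of_mem _ (Set.mem_union_left _ hp)) _ (Set.mem_insert _ _) hne
    · exact (hstep β hβ).2.1.2 _ (Set.mem_insert _ _) q
        (Set.mem_insert_of_mem _ (Set.mem_union_left _ hq)) hne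
    · rcases lt_trichotomy β γ with h | h | h
      · exact (hstep γ hγ).2.1.2 _
          (Set.mem_insert_of_mem _ (Set.mem_union_right _ (Set.mem_image_of_mem F h)))
          _ (Set.mem_insert _ _) hne
      · exact absurd (congrArg F h) hne
      · exact (hstep β hβ).2.1.2 _ (Set.mem_insert _ _) _
          (Set.mem_insert_of_mem _ (Set.mem_union_right _ (Set.mem_image_of_mem F h))) hne

lemma famAt_step (α : (aleph 1).ord.ToType) : StepProp (famAt α) (F α) := by
  rw [F_eq α]; exact nextPair_spec (famAt_c α) (famAt_i α) (famAt_inv α)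

lemma F_ne {β α : (aleph 1).ord.ToType} (h : β < α) : F α ≠ F β := fun he =>
  (famAt_step α).1 (by
    rw [he]; exact Set.mem_union_right _ (Set.mem_image_of_mem F h))

lemma F_injective : Function.Injective F := by
  intro γ δ h
  rcases lt_trichotomy γ δ with hlt | he | hlt
  · exact absurd h.symm (F_ne hlt)
  · exact he
  · exact absurd h (F_ne hlt)

/-! ### The gap on the ordinal `ω₁` -/

lemma mainO : ∃ A B : (aleph 1).ord.ToType → Set ℕ,
    (∀ α, (A α).Infinite) ∧ (∀ α, (B α).Infinite) ∧
    (∀ α β, (A α ∩ B β).Finite) ∧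
    ¬ ∃ S : Set ℕ, ∀ α, (A α \ S).Finite ∧ (B α ∩ S).Finite := by
  have hcross : ∀ γ δ : (aleph 1).ord.ToType, γ < δ →
      (((F δ).1 ∪ (F δ).2) ∩ ((F γ).1 ∪ (F γ).2)).Finite := fun γ δ h =>
    (famAt_step δ).2.1.2 _ (Set.mem_insert _ _) _
      (Set.mem_insert_of_mem _ (Set.mem_union_right _ (Set.mem_image_of_mem F h))) (F_ne h)
  refine ⟨fun α => (F α).1, fun α => (F α).2, ?_, ?_, ?_, ?_⟩
  · exact fun α => ((famAt_step α).2.1.1 _ (Set.mem_insert _ _)).1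
  · exact fun α => ((famAt_step α).2.1.1 _ (Set.mem_insert _ _)).2.1
  · intro α β
    rcases lt_trichotomy α β with h | rfl | h
    · exact (hcross α β h).subset fun x hx => ⟨Or.inr hx.2, Or.inl hx.1⟩
    · exact ((famAt_step α).2.1.1 _ (Set.mem_insert _ _)).2.2
    · exact (hcross β α h).subset fun x hx => ⟨Or.inl hx.1, Or.inr hx.2⟩
  · rintro ⟨S, hS⟩
    have hbound : ∀ α, ∃ m : ℕ, ((F α).1 \ S) ∪ ((F α).2 ∩ S) ⊆ Set.Iio m := by
      intro α
      obtain ⟨m, hm⟩ := ((hS α).1.union (hS α).2).bddAbove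
      exact ⟨m + 1, fun x hx => Nat.lt_succ_of_le (hm hx)⟩
    choose Nb hNb using hbound
    have hnotall : ¬ ∀ m : ℕ, {α | Nb α = m}.Countable := by
      intro hall
      have hu : (Set.univ : Set ((aleph 1).ord.ToType)).Countable := by
        have : (⋃ m : ℕ, {α | Nb α = m}) = Set.univ := by
          ext α; simp only [Set.mem_iUnion, Set.mem_setOf_eq, Set.mem_univ, iff_true]
          exact ⟨Nb α, rfl⟩
        rw [← this]
        exact Set.countable_iUnion hall
      haveI : Countable ((aleph 1).ord.ToType) := Set.countable_univ_iff.mp hu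
      have h3 : (aleph 1 : Cardinal) ≤ ℵ₀ := by
        rw [← Cardinal.card_ord (aleph 1), ← Cardinal.mk_toType]
        exact Cardinal.mk_le_aleph0
      exact absurd h3 (not_le.mpr aleph0_lt_aleph_one)
    obtain ⟨m, hm⟩ := not_forall.mp hnotall
    have hXinf : {α | Nb α = m}.Infinite := fun hf => hm hf.countable
    set g := hXinf.natEmbedding with hg
    have hU : (⋃ k : ℕ, Set.Iic ((g k : (aleph 1).ord.ToType))).Countable :=
      Set.countable_iUnion fun k => by
        rw [← Set.Iio_insert]; exact (countable_Iio _).insert _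
    have hns : ¬ {α | Nb α = m} ⊆ ⋃ k : ℕ, Set.Iic ((g k : (aleph 1).ord.ToType)) :=
      fun hsub => hm (hU.mono hsub)
    obtain ⟨α, hαX, hαU⟩ := Set.not_subset.mp hns
    have hgα : ∀ k, ((g k : (aleph 1).ord.ToType)) < α := by
      intro k
      by_contra h
      push_neg at h
      exact hαU (Set.mem_iUnion.mpr ⟨k, h⟩)
    have hT := (famAt_step α).2.2 m
    have hinj : Function.Injective (fun k : ℕ => F ((g k : (aleph 1).ord.ToType))) :=
      fun k1 k2 h => g.injective (Subtype.ext (F_injective h))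
    refine Set.infinite_of_injective_forall_mem hinj ?_ hT
    intro k
    have hk : Nb ((g k : (aleph 1).ord.ToType)) = m := (g k).2
    refine ⟨Set.mem_union_right _ (Set.mem_image_of_mem F (hgα k)), ?_⟩
    intro x hx
    rcases hx with ⟨hx1, hx2⟩ | ⟨hx1, hx2⟩
    · by_cases hxS : x ∈ S
      · have := hNb ((g k : (aleph 1).ord.ToType)) (Or.inr ⟨hx2, hxS⟩)
        rwa [hk] at this
      · have := hNb α (Or.inl ⟨hx1, hxS⟩)
        rwa [hαX] at this
    · by_cases hxS : x ∈ S
      · have := hNb α (Or.inr ⟨hx1, hxS⟩)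
        rwa [hαX] at this
      · have := hNb ((g k : (aleph 1).ord.ToType)) (Or.inl ⟨hx2, hxS⟩)
        rwa [hk] at this

end LuzinGap

/-- There exist `ω₁`-indexed families `A`, `B` of infinite subsets of `ω` such that
all intersections `A α ∩ B β` are finite, while no single set `S ⊆ ω` makes all
`A α \ S` and `B α ∩ S` finite. -/
theorem exists_luzin_gap (ι : Type) (hι : #ι = aleph 1) :
    ∃ A B : ι → Set ℕ,
      (∀ α, (A α).Infinite) ∧ (∀ α, (B α).Infinite) ∧
      (∀ α β, (A α ∩ B β).Finite) ∧
      ¬ ∃ S : Set ℕ, ∀ α, (A α \ S).Finite ∧ (B α ∩ S).Finite := by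
  obtain ⟨A, B, h1, h2, h3, h4⟩ := LuzinGap.mainO
  obtain ⟨e⟩ : Nonempty (ι ≃ (aleph 1).ord.ToType) :=
    Cardinal.eq.mp (by rw [hι, Cardinal.mk_toType, Cardinal.card_ord])
  refine ⟨A ∘ e, B ∘ e, fun α => h1 _, fun α => h2 _, fun α β => h3 _ _, ?_⟩
  rintro ⟨S, hS⟩
  refine h4 ⟨S, fun o => ?_⟩
  simpa using hS (e.symm o)
end

section
/- Let {A_α : α < ω₁} and {B_α : α < ω₁} be families of infinite subsets of ω with A_α ∩ B_β finite for all α, β < ω₁. For each n ∈ ℕ let X_n = {(x(α,n), x(β,n)) : n ∈ A_α ∩ B_β, α, β ∈ ω₁} ⊆ S_{ω₁} × S_{ω₁}. Then every compact subset of S_{ω₁} × S_{ω₁} meets only finitely many of the sets X_n; that is, the family {X_n : n ∈ ℕ} is compact-finite. -/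
open Set Filter Topology Cardinal

/-- The sequential fan with spokes indexed by `κ`: underlying set is
`Option (κ × ℕ)`, with `none` the apex and `some (α, n)` the `n`-th point
of the `α`-th spoke. -/
def Fan (κ : Type*) : Type _ := Option (κ × ℕ)

/-- The quotient topology on the fan: each point `some (α, n)` is isolated and
a set containing the apex is open iff it contains a tail of every spoke. -/
instance Fan.instTopologicalSpace (κ : Type*) : TopologicalSpace (Fan κ) where
  IsOpen s := (none : Option (κ × ℕ)) ∈ s → ∀ α : κ, {n : ℕ | (some (α, n) : Option (κ × ℕ)) ∉ s}.Finite
  isOpen_univ := by intro _ α; exact Set.finite_empty.subset (fun n hn => hn trivial)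
  isOpen_inter := by
    intro s t hs ht hmem α
    refine ((hs hmem.1 α).union (ht hmem.2 α)).subset ?_
    intro n hn
    by_contra h
    simp only [Set.mem_union, Set.mem_setOf_eq] at h
    push_neg at h
    exact hn ⟨h.1, h.2⟩
  isOpen_sUnion := by
    intro S hS hmem α
    obtain ⟨s, hsS, hs⟩ := hmem
    refine (hS s hsS hs α).subset ?_
    intro n hn hns
    exact hn (Set.mem_sUnion.2 ⟨s, hsS, hns⟩)

/-- The apex of the sequential fan. -/
def Fan.apex {κ : Type*} : Fan κ := (none : Option (κ × ℕ))

/-- The `n`-th point of the `α`-th spoke of the sequential fan. -/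
def Fan.pt {κ : Type*} (α : κ) (n : ℕ) : Fan κ := (some (α, n) : Option (κ × ℕ))

lemma Fan.pt_injective {κ : Type*} {α β : κ} {m k : ℕ}
    (h : Fan.pt α m = Fan.pt β k) : α = β ∧ m = k := by
  have h' : (some (α, m) : Option (κ × ℕ)) = some (β, k) := h
  simp only [Option.some.injEq, Prod.mk.injEq] at h'
  exact h'

lemma Fan.isOpen_singleton_pt {κ : Type*} (α : κ) (n : ℕ) :
    IsOpen ({Fan.pt α n} : Set (Fan κ)) := by
  intro h
  exact absurd h (fun h' => by
    have h'' : (none : Option (κ × ℕ)) = some (α, n) := Set.mem_singleton_iff.1 h'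
    cases h'')

/-- A compact subset of the fan meets only finitely many spokes. -/
lemma Fan.spokes_finite {κ : Type*} {K : Set (Fan κ)} (hK : IsCompact K) :
    {α : κ | ∃ n, Fan.pt α n ∈ K}.Finite := by
  classical
  set S := {α : κ | ∃ n, Fan.pt α n ∈ K} with hS
  set f : κ → ℕ := fun α => if h : ∃ n, Fan.pt α n ∈ K then h.choose else 0 with hf
  have hfK : ∀ α ∈ S, Fan.pt α (f α) ∈ K := by
    intro α hα
    have hα' : ∃ n, Fan.pt α n ∈ K := hα
    show Fan.pt α (if h : ∃ n, Fan.pt α n ∈ K then h.choose else 0) ∈ K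
    rw [dif_pos hα']
    exact hα'.choose_spec
  set D : Set (Fan κ) := (fun α => Fan.pt α (f α)) '' S with hD
  have hDK : D ⊆ K := by rintro _ ⟨α, hα, rfl⟩; exact hfK α hα
  have hDclosed : IsClosed D := by
    rw [← isOpen_compl_iff]
    intro _ α
    have hsub : {n : ℕ | (some (α, n) : Option (κ × ℕ)) ∉ Dᶜ} ⊆ {f α} := by
      intro n hn
      simp only [Set.mem_setOf_eq, Set.mem_compl_iff, not_not] at hn
      have hn' : Fan.pt α n ∈ D := by
        by_contra hc
        exact hn hc
      obtain ⟨β, hβ, hβeq⟩ := hn'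
      obtain ⟨h1, h2⟩ := Fan.pt_injective hβeq
      simp [← h1, h2]
    exact (Set.finite_singleton _).subset hsub
  have hDcomp : IsCompact D := hK.of_isClosed_subset hDclosed hDK
  -- cover D by singletons
  obtain ⟨t, ht⟩ := hDcomp.elim_finite_subcover
    (fun d : D => ({(d : Fan κ)} : Set (Fan κ)))
    (fun d => by
      obtain ⟨α, hα, hαeq⟩ := d.2
      show IsOpen ({(d : Fan κ)} : Set (Fan κ))
      rw [← hαeq]
      exact Fan.isOpen_singleton_pt α (f α))
    (fun x hx => Set.mem_iUnion.2 ⟨⟨x, hx⟩, rfl⟩)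
  have hDfin : D.Finite := by
    refine Set.Finite.subset (Set.Finite.biUnion t.finite_toSet
      (fun d _ => Set.finite_singleton (d : Fan κ))) ?_
    intro x hx
    obtain ⟨d, hd⟩ := Set.mem_iUnion.1 (ht hx)
    simp only [Set.mem_iUnion, exists_prop] at hd
    exact Set.mem_biUnion hd.1 hd.2
  refine Set.Finite.of_finite_image (f := fun α => Fan.pt α (f α)) (hDfin.subset ?_) ?_
  · exact Set.image_subset_iff.2 fun α hα => Set.mem_image_of_mem _ hα
  · intro a _ b _ hab
    exact (Fan.pt_injective hab).1

/-- The family `{X_n}` built from almost disjoint families `A`, `B` is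
compact-finite in `S_{ω₁} × S_{ω₁}`. -/
theorem fan_square_family_compactFinite (ι : Type) (hι : #ι = aleph 1)
    (A B : ι → Set ℕ) (hA : ∀ α, (A α).Infinite) (hB : ∀ α, (B α).Infinite)
    (hAB : ∀ α β, (A α ∩ B β).Finite)
    (X : ℕ → Set (Fan ι × Fan ι))
    (hX : ∀ n, X n = {p | ∃ α β : ι, n ∈ A α ∩ B β ∧ p = (Fan.pt α n, Fan.pt β n)})
    (K : Set (Fan ι × Fan ι)) (hK : IsCompact K) :
    {n : ℕ | (X n ∩ K).Nonempty}.Finite := by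
  have hK1 : IsCompact (Prod.fst '' K) := hK.image continuous_fst
  have hK2 : IsCompact (Prod.snd '' K) := hK.image continuous_snd
  have hF := Fan.spokes_finite hK1
  have hG := Fan.spokes_finite hK2
  refine Set.Finite.subset (Set.Finite.biUnion hF fun α _ =>
    Set.Finite.biUnion hG fun β _ => hAB α β) ?_
  intro n hn
  obtain ⟨p, hpX, hpK⟩ := hn
  rw [hX n] at hpX
  obtain ⟨α, β, hnAB, rfl⟩ := hpX
  refine Set.mem_biUnion ⟨n, ⟨_, hpK, rfl⟩⟩ (Set.mem_biUnion ⟨n, ⟨_, hpK, rfl⟩⟩ hnAB)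
end

section
/- For every Tychonoff space X and every n ∈ ℕ, the map f : X^n → A(X) defined by f(x₁,…,x_n) = x₁ + 2x₂ + ⋯ + 2^{n−1} x_n is a homeomorphism of X^n onto a closed subspace of A_{2^n − 1}(X); in particular, A_{2^n − 1}(X) contains a closed copy of X^n. -/
open Set Filter Topology Cardinal

/-- `IsFreeAbelianTopGroup X A i` asserts that the topological abelian group `A`,
together with the map `i : X → A`, is the free Abelian topological group over `X`:
`i` is continuous, `i X` algebraically generates `A`, and every continuous map from
`X` to an Abelian topological group extends to a continuous homomorphism on `A`. -/
structure IsFreeAbelianTopGroup (X : Type*) [TopologicalSpace X]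
    (A : Type*) [AddCommGroup A] [TopologicalSpace A] [IsTopologicalAddGroup A]
    (i : X → A) : Prop where
  continuous_incl : Continuous i
  generates : AddSubgroup.closure (Set.range i) = ⊤
  lift : ∀ (G : Type v) [AddCommGroup G] [TopologicalSpace G] [IsTopologicalAddGroup G]
      (f : X → G), Continuous f → ∃ h : A →+ G, Continuous h ∧ ∀ x, h (i x) = f x

/-- `wordsLe i n` is the set of elements of `A` of reduced length at most `n` with
respect to the basis `i : X → A`: sums of at most `n` letters from `i X ∪ (-i X)`. -/
def wordsLe {X A : Type*} [AddCommGroup A] (i : X → A) (n : ℕ) : Set A :=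
  {a | ∃ l : List (X × Bool), l.length ≤ n ∧
    a = (l.map fun p => if p.2 then i p.1 else -i p.1).sum}

/- ### Auxiliary lemmas -/

private lemma sum_range_two_pow (m : ℕ) : ∑ j ∈ Finset.range m, 2 ^ j = 2 ^ m - 1 := by
  induction m with
  | zero => simp
  | succ m ih =>
    rw [Finset.sum_range_succ, ih]
    have h1 := Nat.one_le_two_pow (n := m)
    have h2 : 2 ^ (m + 1) = 2 ^ m * 2 := pow_succ 2 m
    omega

/-- Subsets of `ℕ` are determined by the sum of the corresponding powers of two. -/
private lemma two_pow_sum_inj : ∀ (m : ℕ) (S T : Finset ℕ), (∀ j ∈ S, j < m) →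
    (∀ j ∈ T, j < m) → ∑ j ∈ S, 2 ^ j = ∑ j ∈ T, 2 ^ j → S = T := by
  intro m
  induction m with
  | zero =>
    intro S T hS hT _
    have hS' : S = ∅ := Finset.eq_empty_of_forall_notMem fun j hj =>
      (Nat.not_lt_zero j) (hS j hj)
    have hT' : T = ∅ := Finset.eq_empty_of_forall_notMem fun j hj =>
      (Nat.not_lt_zero j) (hT j hj)
    rw [hS', hT']
  | succ m ih =>
    intro S T hS hT hsum
    have hbound : ∀ U : Finset ℕ, (∀ j ∈ U, j < m) → ∑ j ∈ U, 2 ^ j < 2 ^ m := by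
      intro U hU
      have h1 : ∑ j ∈ U, 2 ^ j ≤ ∑ j ∈ Finset.range m, 2 ^ j :=
        Finset.sum_le_sum_of_subset fun j hj => Finset.mem_range.mpr (hU j hj)
      have h2 := Nat.one_le_two_pow (n := m)
      rw [sum_range_two_pow] at h1
      omega
    have hgen : ∀ U : Finset ℕ, (∀ j ∈ U, j < m + 1) → ∀ j ∈ U.erase m, j < m := by
      intro U hU j hj
      have h1 := hU j (Finset.mem_of_mem_erase hj)
      have h2 := Finset.ne_of_mem_erase hj
      omega
    have hgen2 : ∀ U : Finset ℕ, m ∉ U → (∀ j ∈ U, j < m + 1) → ∀ j ∈ U, j < m := by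
      intro U hm hU j hj
      have h1 := hU j hj
      have h2 : j ≠ m := fun h => hm (h ▸ hj)
      omega
    by_cases hmS : m ∈ S <;> by_cases hmT : m ∈ T
    · have h1 : 2 ^ m + ∑ j ∈ S.erase m, 2 ^ j = ∑ j ∈ S, 2 ^ j :=
        Finset.add_sum_erase _ _ hmS
      have h2 : 2 ^ m + ∑ j ∈ T.erase m, 2 ^ j = ∑ j ∈ T, 2 ^ j :=
        Finset.add_sum_erase _ _ hmT
      have h3 : ∑ j ∈ S.erase m, 2 ^ j = ∑ j ∈ T.erase m, 2 ^ j := by omega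
      have h4 := ih (S.erase m) (T.erase m) (hgen S hS) (hgen T hT) h3
      rw [← Finset.insert_erase hmS, ← Finset.insert_erase hmT, h4]
    · exfalso
      have h1 : 2 ^ m ≤ ∑ j ∈ S, 2 ^ j :=
        Finset.single_le_sum (fun j _ => Nat.zero_le _) hmS
      have h2 := hbound T (hgen2 T hmT hT)
      omega
    · exfalso
      have h1 : 2 ^ m ≤ ∑ j ∈ T, 2 ^ j :=
        Finset.single_le_sum (fun j _ => Nat.zero_le _) hmT
      have h2 := hbound S (hgen2 S hmS hS)
      omega
    · exact ih S T (hgen2 S hmS hS) (hgen2 T hmT hT) hsum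

private lemma fin_two_pow_inj {n : ℕ} (S T : Finset (Fin n))
    (h : ∑ j ∈ S, 2 ^ (j : ℕ) = ∑ j ∈ T, 2 ^ (j : ℕ)) : S = T := by
  have himg : S.image Fin.val = T.image Fin.val := by
    apply two_pow_sum_inj n
    · intro j hj
      obtain ⟨j', _, rfl⟩ := Finset.mem_image.mp hj
      exact j'.is_lt
    · intro j hj
      obtain ⟨j', _, rfl⟩ := Finset.mem_image.mp hj
      exact j'.is_lt
    · rw [Finset.sum_image (fun a _ b _ hab => Fin.val_injective hab),
        Finset.sum_image (fun a _ b _ hab => Fin.val_injective hab)]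
      exact h
  ext j
  constructor
  · intro hj
    have h1 : (j : ℕ) ∈ T.image Fin.val := himg ▸ Finset.mem_image_of_mem _ hj
    obtain ⟨j', hj', hval⟩ := Finset.mem_image.mp h1
    rwa [Fin.val_injective hval] at hj'
  · intro hj
    have h1 : (j : ℕ) ∈ S.image Fin.val := himg.symm ▸ Finset.mem_image_of_mem _ hj
    obtain ⟨j', hj', hval⟩ := Finset.mem_image.mp h1
    rwa [Fin.val_injective hval] at hj'

private lemma wordsLe_add {X A : Type*} [AddCommGroup A] {i : X → A} {p q : ℕ} {a b : A}
    (ha : a ∈ wordsLe i p) (hb : b ∈ wordsLe i q) : a + b ∈ wordsLe i (p + q) := by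
  obtain ⟨l₁, hl₁, rfl⟩ := ha
  obtain ⟨l₂, hl₂, rfl⟩ := hb
  refine ⟨l₁ ++ l₂, ?_, ?_⟩
  · rw [List.length_append]; omega
  · rw [List.map_append, List.sum_append]

private lemma wordsLe_nsmul {X A : Type*} [AddCommGroup A] (i : X → A) (k : ℕ) (x : X) :
    (k • i x) ∈ wordsLe i k :=
  ⟨List.replicate k (x, true), by simp,
    by simp [List.map_replicate, List.sum_replicate]⟩

private lemma wordsLe_sum {X A : Type*} [AddCommGroup A] {i : X → A} {ι : Type*}
    (s : Finset ι) (g : ι → A) (m : ι → ℕ) (h : ∀ j ∈ s, g j ∈ wordsLe i (m j)) :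
    ∑ j ∈ s, g j ∈ wordsLe i (∑ j ∈ s, m j) := by
  classical
  induction s using Finset.induction_on with
  | empty => exact ⟨[], by simp, by simp⟩
  | @insert a s ha ih =>
    rw [Finset.sum_insert ha, Finset.sum_insert ha]
    exact wordsLe_add (h _ (Finset.mem_insert_self _ _))
      (ih fun j hj => h j (Finset.mem_insert_of_mem hj))

/-- In a compact Hausdorff space, finitely supported integer "measures" are determined
by integration against continuous real functions. -/
private lemma finsupp_eq_of_forall_eval {B : Type*} [TopologicalSpace B] [CompactSpace B]
    [T2Space B] (d e : B →₀ ℤ)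
    (h : ∀ ψ : C(B, ℝ), (Finsupp.liftAddHom fun p => zmultiplesHom ℝ (ψ p)) d =
      (Finsupp.liftAddHom fun p => zmultiplesHom ℝ (ψ p)) e) : d = e := by
  classical
  have key : ∀ g : B →₀ ℤ,
      (∀ ψ : C(B, ℝ), (Finsupp.liftAddHom fun p => zmultiplesHom ℝ (ψ p)) g = 0) →
      g = 0 := by
    intro g hg
    by_contra hne
    obtain ⟨p₀, hp₀⟩ := Finsupp.support_nonempty_iff.mpr hne
    have hFc : IsClosed (↑(g.support.erase p₀) : Set B) :=
      (g.support.erase p₀).finite_toSet.isClosed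
    have hdisj : Disjoint (↑(g.support.erase p₀) : Set B) ({p₀} : Set B) := by
      simp [Set.disjoint_singleton_right]
    obtain ⟨ψ, hψ0, hψ1, -⟩ :=
      exists_continuous_zero_one_of_isClosed hFc isClosed_singleton hdisj
    have hsum : ∑ p ∈ g.support, g p • ψ p = 0 := by
      simpa [Finsupp.liftAddHom_apply, Finsupp.sum, zmultiplesHom_apply] using hg ψ
    have h2 : ∀ b ∈ g.support, b ≠ p₀ → g b • ψ b = 0 := by
      intro b hb hbne
      have hb0 : ψ b = 0 := hψ0 (Finset.mem_coe.mpr (Finset.mem_erase.mpr ⟨hbne, hb⟩))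
      rw [hb0, smul_zero]
    rw [Finset.sum_eq_single_of_mem p₀ hp₀ h2] at hsum
    have h1 : ψ p₀ = 1 := hψ1 rfl
    rw [h1] at hsum
    have h3 : (g p₀ : ℝ) = 0 := by
      rwa [zsmul_eq_mul, mul_one] at hsum
    exact Finsupp.mem_support_iff.mp hp₀ (by exact_mod_cast h3)
  have hde := key (d - e) fun ψ => by rw [map_sub, h ψ, sub_self]
  exact sub_eq_zero.mp hde

/-- For a Tychonoff space `X`, the map `(x₁,…,x_n) ↦ x₁ + 2x₂ + ⋯ + 2^{n-1}x_n` is a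
homeomorphism of `X^n` onto a closed subspace of `A_{2^n - 1}(X)`: it takes values in
`A_{2^n-1}(X)`, is a topological embedding, and its range is closed in `A_{2^n-1}(X)`. -/
theorem closed_copy_of_power_in_free_abelian (X : Type*) [TopologicalSpace X] [T35Space X]
    (A : Type*) [AddCommGroup A] [TopologicalSpace A] [IsTopologicalAddGroup A]
    (i : X → A) (hfree : IsFreeAbelianTopGroup X A i) (n : ℕ)
    (f : (Fin n → X) → A)
    (hf : ∀ x : Fin n → X, f x = ∑ j : Fin n, ((2 : ℤ) ^ (j : ℕ)) • i (x j)) :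
    Set.range f ⊆ wordsLe i (2 ^ n - 1) ∧
    IsEmbedding f ∧
    IsClosed {a : ↥(wordsLe i (2 ^ n - 1)) | (a : A) ∈ Set.range f} := by
  classical
  -- Part 1 : the range is contained in the words of length at most `2 ^ n - 1`.
  have part1 : Set.range f ⊆ wordsLe i (2 ^ n - 1) := by
    rintro _ ⟨x, rfl⟩
    rw [hf x]
    have hterm : ∀ j : Fin n, ((2 : ℤ) ^ (j : ℕ)) • i (x j) ∈ wordsLe i (2 ^ (j : ℕ)) := by
      intro j
      have hcast : ((2 : ℤ) ^ (j : ℕ)) = ((2 ^ (j : ℕ) : ℕ) : ℤ) := by push_cast; ring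
      rw [hcast, natCast_zsmul]
      exact wordsLe_nsmul i _ _
    have hmem := wordsLe_sum Finset.univ _ (fun j : Fin n => 2 ^ (j : ℕ))
      (fun j _ => hterm j)
    have htot : ∑ j : Fin n, 2 ^ (j : ℕ) = 2 ^ n - 1 := by
      rw [Fin.sum_univ_eq_sum_range (fun j => 2 ^ j) n]
      exact sum_range_two_pow n
    rwa [htot] at hmem
  -- The cube `B`, into which `X` embeds.
  let B := C(X, unitInterval) → unitInterval
  let u : X → B := fun x φ => φ x
  have hu_cont : Continuous u := continuous_pi fun φ => φ.continuous
  have hu_inj : Function.Injective u := by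
    intro x y hxy
    by_contra hne
    obtain ⟨φ₀, hφc, hφne⟩ := separatesPoints_continuous_of_t35Space_Icc hne
    exact hφne (congrFun hxy (⟨φ₀, hφc⟩ : C(X, unitInterval)))
  have hu_ind : IsInducing u := by
    rw [isInducing_iff_nhds]
    intro x
    refine le_antisymm (Filter.map_le_iff_le_comap.mp (hu_cont.tendsto x)) ?_
    intro s hs
    obtain ⟨U, hUs, hUo, hxU⟩ := mem_nhds_iff.mp hs
    obtain ⟨φ₀, hφc, hφx, hφU⟩ := CompletelyRegularSpace.completely_regular x Uᶜ
      hUo.isClosed_compl (by simpa)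
    refine mem_comap.mpr
      ⟨(fun g : B => g ⟨φ₀, hφc⟩) ⁻¹' {t : unitInterval | (t : ℝ) < 1}, ?_, ?_⟩
    · refine IsOpen.mem_nhds ?_ ?_
      · have hopen : IsOpen {t : unitInterval | (t : ℝ) < 1} :=
          isOpen_Iio.preimage continuous_subtype_val
        exact hopen.preimage (continuous_apply (⟨φ₀, hφc⟩ : C(X, unitInterval)))
      · show ((φ₀ x : unitInterval) : ℝ) < 1
        rw [hφx]
        norm_num
    · intro y hy
      have hy' : ((φ₀ y : unitInterval) : ℝ) < 1 := hy
      apply hUs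
      by_contra hyU
      have h1 : φ₀ y = 1 := hφU hyU
      rw [h1] at hy'
      norm_num at hy'
  -- Lift each continuous function on `B` to a continuous homomorphism on `A`.
  choose h hc hspec using fun ψ : C(B, ℝ) =>
    hfree.lift _ (fun x => ULift.up (ψ (u x)))
      (by exact continuous_uliftUp.comp (ψ.continuous.comp hu_cont))
  let D : ULift ℝ →+ ℝ := { toFun := ULift.down, map_zero' := rfl, map_add' := fun _ _ => rfl }
  let Φ : A → (C(B, ℝ) → ℝ) := fun a ψ => (h ψ a).down
  have hΦc : Continuous Φ := continuous_pi fun ψ => continuous_uliftDown.comp (hc ψ)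
  -- Every element of `A` is an integer combination of elements of `i '' X`.
  let Ψ : (X →₀ ℤ) →+ A := Finsupp.liftAddHom fun x => zmultiplesHom A (i x)
  have hΨsurj : ∀ a : A, ∃ c : X →₀ ℤ, Ψ c = a := by
    intro a
    have h1 : AddSubgroup.closure (Set.range i) ≤ Ψ.range := by
      rw [AddSubgroup.closure_le]
      rintro _ ⟨x, rfl⟩
      refine ⟨Finsupp.single x 1, ?_⟩
      show (Finsupp.liftAddHom fun x => zmultiplesHom A (i x)) (Finsupp.single x 1) = i x
      rw [Finsupp.liftAddHom_apply_single]
      exact one_zsmul _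
    have h2 : a ∈ AddSubgroup.closure (Set.range i) := by
      rw [hfree.generates]; exact AddSubgroup.mem_top a
    exact h1 h2
  -- Key computation: `Φ` corresponds to integration of the pushforward measure.
  have hkey : ∀ (c : X →₀ ℤ) (ψ : C(B, ℝ)), Φ (Ψ c) ψ =
      (Finsupp.liftAddHom fun p => zmultiplesHom ℝ (ψ p)) (Finsupp.mapDomain u c) := by
    intro c ψ
    show D (h ψ (Ψ c)) = _
    have h1 : Ψ c = c.sum fun x r => r • i x := by
      show (Finsupp.liftAddHom fun x => zmultiplesHom A (i x)) c = _
      rw [Finsupp.liftAddHom_apply]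
      rfl
    rw [h1, map_finsuppSum, map_finsuppSum, Finsupp.liftAddHom_apply,
      Finsupp.sum_mapDomain_index_addMonoidHom]
    refine Finsupp.sum_congr fun x _ => ?_
    rw [map_zsmul, map_zsmul, hspec]
    rfl
  have hΦinj : Function.Injective Φ := by
    intro a b hab
    obtain ⟨c, rfl⟩ := hΨsurj a
    obtain ⟨c', rfl⟩ := hΨsurj b
    have h1 := finsupp_eq_of_forall_eval (Finsupp.mapDomain u c) (Finsupp.mapDomain u c')
      fun ψ => by rw [← hkey, ← hkey, hab]
    rw [Finsupp.mapDomain_injective hu_inj h1]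
  -- The model map `T` on the compact cube power.
  let T : (Fin n → B) → (C(B, ℝ) → ℝ) :=
    fun z ψ => ∑ j : Fin n, ((2 : ℤ) ^ (j : ℕ)) • ψ (z j)
  let mz : (Fin n → B) → (B →₀ ℤ) :=
    fun z => ∑ j : Fin n, Finsupp.single (z j) ((2 : ℤ) ^ (j : ℕ))
  have hTΛ : ∀ z ψ, T z ψ = (Finsupp.liftAddHom fun p => zmultiplesHom ℝ (ψ p)) (mz z) := by
    intro z ψ
    show (∑ j : Fin n, ((2 : ℤ) ^ (j : ℕ)) • ψ (z j)) =
      (Finsupp.liftAddHom fun p => zmultiplesHom ℝ (ψ p))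
        (∑ j : Fin n, Finsupp.single (z j) ((2 : ℤ) ^ (j : ℕ)))
    rw [map_sum]
    refine Finset.sum_congr rfl fun j _ => ?_
    rw [Finsupp.liftAddHom_apply_single]
    rfl
  have hmz_apply : ∀ z p, mz z p =
      ∑ j ∈ Finset.univ.filter (fun j : Fin n => z j = p), (2 : ℤ) ^ (j : ℕ) := by
    intro z p
    rw [Finset.sum_filter]
    show (∑ j : Fin n, Finsupp.single (z j) ((2 : ℤ) ^ (j : ℕ))) p = _
    rw [Finsupp.finset_sum_apply]
    exact Finset.sum_congr rfl fun j _ => by rw [Finsupp.single_apply]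
  have hΦf : ∀ x : Fin n → X, Φ (f x) = T (fun j => u (x j)) := by
    intro x
    funext ψ
    show D (h ψ (f x)) = ∑ j : Fin n, ((2 : ℤ) ^ (j : ℕ)) • ψ (u (x j))
    rw [hf x, map_sum, map_sum]
    refine Finset.sum_congr rfl fun j _ => ?_
    rw [map_zsmul, map_zsmul, hspec]
    rfl
  have hmz_mem_support : ∀ (z : Fin n → B) (j : Fin n), z j ∈ (mz z).support := by
    intro z j
    rw [Finsupp.mem_support_iff, hmz_apply]
    have hpos : (0 : ℤ) < ∑ j' ∈ Finset.univ.filter (fun j' : Fin n => z j' = z j),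
        (2 : ℤ) ^ (j' : ℕ) :=
      Finset.sum_pos (fun j' _ => by positivity) ⟨j, by simp⟩
    exact hpos.ne'
  have hT_inj : Function.Injective T := by
    intro z w hzw
    have hm : mz z = mz w := finsupp_eq_of_forall_eval _ _ fun ψ => by
      rw [← hTΛ, ← hTΛ, hzw]
    funext j
    have h1 : ∑ j' ∈ Finset.univ.filter (fun j' : Fin n => z j' = z j), 2 ^ (j' : ℕ)
        = ∑ j' ∈ Finset.univ.filter (fun j' : Fin n => w j' = z j), 2 ^ (j' : ℕ) := by
      have h2 := DFunLike.congr_fun hm (z j)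
      rw [hmz_apply, hmz_apply] at h2
      exact_mod_cast h2
    have h3 := fin_two_pow_inj _ _ h1
    have h4 : j ∈ Finset.univ.filter (fun j' : Fin n => w j' = z j) := h3 ▸ (by simp)
    exact ((Finset.mem_filter.mp h4).2).symm
  have hT_cont : Continuous T :=
    continuous_pi fun ψ => continuous_finset_sum _ fun j _ =>
      (ψ.continuous.comp (continuous_apply j)).zsmul _
  have hT_emb : IsClosedEmbedding T := hT_cont.isClosedEmbedding hT_inj
  -- Embedding of `f`.
  have hf_cont : Continuous f := by
    have h1 : f = fun x => ∑ j : Fin n, ((2 : ℤ) ^ (j : ℕ)) • i (x j) := funext hf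
    rw [h1]
    exact continuous_finset_sum _ fun j _ =>
      (hfree.continuous_incl.comp (continuous_apply j)).zsmul _
  have hF_ind : IsInducing (fun x : Fin n → X => fun j => u (x j)) := by
    rw [isInducing_iff_nhds]
    intro x
    rw [nhds_pi, nhds_pi, Filter.pi, Filter.pi, Filter.comap_iInf]
    refine iInf_congr fun j => ?_
    rw [hu_ind.nhds_eq_comap (x j), Filter.comap_comap, Filter.comap_comap]
    rfl
  have hF_emb : IsEmbedding (fun x : Fin n → X => fun j => u (x j)) :=
    ⟨hF_ind, fun a b hab => funext fun j => hu_inj (congrFun hab j)⟩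
  have hcomp : Φ ∘ f = T ∘ (fun x : Fin n → X => fun j => u (x j)) :=
    funext fun x => hΦf x
  have hf_emb : IsEmbedding f := by
    refine IsEmbedding.of_comp hf_cont hΦc ?_
    rw [hcomp]
    exact hT_emb.isEmbedding.comp hF_emb
  refine ⟨part1, hf_emb, ?_⟩
  -- Part 3 : the trace of the range on `A_{2^n-1}(X)` is closed.
  have hset : {a : ↥(wordsLe i (2 ^ n - 1)) | (a : A) ∈ Set.range f}
      = (fun a : ↥(wordsLe i (2 ^ n - 1)) => Φ (a : A)) ⁻¹' (Set.range T) := by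
    ext a
    simp only [Set.mem_setOf_eq, Set.mem_preimage, Set.mem_range]
    constructor
    · rintro ⟨x, hx⟩
      exact ⟨fun j => u (x j), by rw [← hΦf x, hx]⟩
    · rintro ⟨z, hz⟩
      obtain ⟨c, hc'⟩ := hΨsurj (a : A)
      have hm : mz z = Finsupp.mapDomain u c := by
        apply finsupp_eq_of_forall_eval
        intro ψ
        rw [← hTΛ, ← hkey, hc']
        exact congrFun hz ψ
      have hz_mem : ∀ j : Fin n, ∃ x : X, u x = z j := by
        intro j
        have h1 := hmz_mem_support z j
        rw [hm] at h1
        have h2 := Finsupp.mapDomain_support h1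
        obtain ⟨x, _, hx⟩ := Finset.mem_image.mp h2
        exact ⟨x, hx⟩
      choose x' hx' using hz_mem
      refine ⟨x', ?_⟩
      apply hΦinj
      rw [hΦf x']
      have h5 : (fun j => u (x' j)) = z := funext hx'
      rw [h5, hz]
  rw [hset]
  exact hT_emb.isClosed_range.preimage (hΦc.comp continuous_subtype_val)
end

section
/- Let X be a Tychonoff space such that every compact subset of A(X) is contained in A_n(X) for some n, and suppose each A_n(X) is a normal k-space. If A(X) is a k_R-space, then A(X) is a k-space. -/
open Set Filter Topology Cardinal

namespace FKR

noncomputable section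

open Pointwise
open scoped Classical


variable {X A : Type*} [AddCommGroup A] (i : X → A)

lemma wordsLe_mono {m n : ℕ} (h : m ≤ n) : wordsLe i m ⊆ wordsLe i n := by
  rintro a ⟨l, hl, rfl⟩
  exact ⟨l, hl.trans h, rfl⟩

lemma zero_mem_wordsLe (n : ℕ) : (0 : A) ∈ wordsLe i n :=
  ⟨[], by simp, by simp⟩

lemma add_mem_wordsLe {a b : A} {m n : ℕ} (ha : a ∈ wordsLe i m) (hb : b ∈ wordsLe i n) :
    a + b ∈ wordsLe i (m + n) := by
  obtain ⟨l, hl, rfl⟩ := ha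
  obtain ⟨l', hl', rfl⟩ := hb
  exact ⟨l ++ l', by simpa using Nat.add_le_add hl hl', by simp⟩

lemma neg_word_sum (l : List (X × Bool)) :
    -((l.map fun p => if p.2 then i p.1 else -i p.1).sum) =
      ((l.map fun p => (p.1, !p.2)).map fun p => if p.2 then i p.1 else -i p.1).sum := by
  induction l with
  | nil => simp
  | cons p t ih =>
      obtain ⟨x, b⟩ := p
      cases b <;> simp [neg_add, ih] <;> abel

lemma neg_mem_wordsLe {a : A} {n : ℕ} (ha : a ∈ wordsLe i n) : -a ∈ wordsLe i n := by
  obtain ⟨l, hl, rfl⟩ := ha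
  exact ⟨l.map fun p => (p.1, !p.2), by simpa using hl, (neg_word_sum i l).symm ▸ rfl⟩

lemma zsmul_mem_wordsLe (k : ℤ) (x : X) : k • i x ∈ wordsLe i k.natAbs := by
  rcases le_or_gt 0 k with hk | hk
  · refine ⟨List.replicate k.natAbs (x, true), by simp, ?_⟩
    rw [List.map_replicate, List.sum_replicate, if_pos rfl, ← natCast_zsmul,
      Int.natAbs_of_nonneg hk]
  · refine ⟨List.replicate k.natAbs (x, false), by simp, ?_⟩
    rw [List.map_replicate, List.sum_replicate]
    have h1 : ((k.natAbs : ℤ)) = -k := Int.ofNat_natAbs_of_nonpos hk.le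
    rw [if_neg (by simp), smul_neg, ← natCast_zsmul, h1, neg_smul, neg_neg]

lemma sum_mem_wordsLe (s : Finset X) (c : X → ℤ) :
    (∑ x ∈ s, c x • i x) ∈ wordsLe i (∑ x ∈ s, (c x).natAbs) := by
  classical
  induction s using Finset.induction_on with
  | empty => simpa using zero_mem_wordsLe i 0
  | @insert x s hx ih =>
      rw [Finset.sum_insert hx, Finset.sum_insert hx]
      exact add_mem_wordsLe i (zsmul_mem_wordsLe i _ _) ih

lemma iUnion_wordsLe (hgen : AddSubgroup.closure (Set.range i) = ⊤) :
    (⋃ n, wordsLe i n) = Set.univ := by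
  have : AddSubgroup.closure (Set.range i) ≤
      { carrier := ⋃ n, wordsLe i n
        zero_mem' := mem_iUnion.mpr ⟨0, zero_mem_wordsLe i 0⟩
        add_mem' := by
          rintro a b ha hb
          obtain ⟨m, hm⟩ := mem_iUnion.mp ha
          obtain ⟨n, hn⟩ := mem_iUnion.mp hb
          exact mem_iUnion.mpr ⟨m + n, add_mem_wordsLe i hm hn⟩
        neg_mem' := by
          rintro a ha
          obtain ⟨m, hm⟩ := mem_iUnion.mp ha
          exact mem_iUnion.mpr ⟨m, neg_mem_wordsLe i hm⟩ } := by
    rw [AddSubgroup.closure_le]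
    rintro a ⟨x, rfl⟩
    exact mem_iUnion.mpr ⟨1, ⟨[(x, true)], by simp, by simp⟩⟩
  rw [hgen] at this
  exact eq_univ_of_forall fun a => this (AddSubgroup.mem_top a)



variable (X : Type*) [TopologicalSpace X]

/-- The index monoid: continuous `[0,1]`-valued functions on `X`, under pointwise mult. -/
def Lam := {φ : X → ℝ // Continuous φ ∧ ∀ x, φ x ∈ Icc (0:ℝ) 1}

instance : Monoid (Lam X) where
  mul a b := ⟨fun x => a.1 x * b.1 x, a.2.1.mul b.2.1, fun x =>
    ⟨mul_nonneg (a.2.2 x).1 (b.2.2 x).1, mul_le_one₀ (a.2.2 x).2 (b.2.2 x).1 (b.2.2 x).2⟩⟩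
  one := ⟨fun _ => 1, continuous_const, fun _ => ⟨zero_le_one, le_refl 1⟩⟩
  mul_assoc a b c := Subtype.ext (funext fun x => mul_assoc _ _ _)
  one_mul a := Subtype.ext (funext fun x => one_mul _)
  mul_one a := Subtype.ext (funext fun x => mul_one _)

lemma Lam.mul_apply (a b : Lam X) (x : X) : (a * b).1 x = a.1 x * b.1 x := rfl
lemma Lam.one_apply (x : X) : (1 : Lam X).1 x = 1 := rfl

/-- The ambient product group. -/
abbrev Gp := Lam X → ℝ

/-- Multiplicative elements of `Gp X`. -/
def QP : Set (Gp X) := {g | g 1 = 1 ∧ ∀ a b : Lam X, g (a * b) = g a * g b}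

/-- Dedekind-style independence of multiplicative elements. -/
lemma indep {s : Finset (Gp X)} (hs : ∀ g ∈ s, g ∈ QP X) (c : Gp X → ℝ)
    (h : ∑ g ∈ s, c g • g = 0) : ∀ g ∈ s, c g = 0 := by
  classical
  set Φ : {g : Gp X // g ∈ s} → (Lam X →* ℝ) := fun g =>
    { toFun := g.1
      map_one' := (hs g.1 g.2).1
      map_mul' := (hs g.1 g.2).2 } with hΦ
  have hinj : Function.Injective Φ := by
    intro g g' hgg'
    apply Subtype.ext
    exact funext fun lam => congrFun (congrArg (fun (ψ : Lam X →* ℝ) => (ψ : Lam X → ℝ)) hgg') lam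
  have hli : LinearIndependent ℝ (fun g : {g : Gp X // g ∈ s} => (g.1 : Gp X)) := by
    have := (linearIndependent_monoidHom (Lam X) ℝ).comp Φ hinj
    exact this
  have := Fintype.linearIndependent_iff.mp hli (fun g => c g.1)
  have hsum : ∑ g : {g : Gp X // g ∈ s}, c g.1 • (g.1 : Gp X) = 0 := by
    rw [← h]
    exact (Finset.sum_attach s fun g => c g • g)
  intro g hg
  exact this hsum ⟨g, hg⟩

/-- The evaluation map `X → Gp X`. -/
def fmap : X → Gp X := fun x lam => lam.1 x

lemma continuous_fmap : Continuous (fmap X) :=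
  continuous_pi fun lam => lam.2.1

lemma fmap_injective [T35Space X] : Function.Injective (fmap X) := by
  intro x y hxy
  by_contra hne
  obtain ⟨f, hf, hfx, hfy⟩ := CompletelyRegularSpace.completely_regular x {y}
    isClosed_singleton (by simpa using hne)
  have : (fmap X x) ⟨fun z => (f z : ℝ), (continuous_subtype_val.comp hf), fun z => (f z).2⟩ =
      (fmap X y) ⟨fun z => (f z : ℝ), (continuous_subtype_val.comp hf), fun z => (f z).2⟩ := by
    rw [hxy]
  have h0 : ((f x : ℝ)) = ((f y : ℝ)) := this
  rw [hfx, hfy rfl] at h0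
  norm_num at h0

/-- `Q`: the closure of the image of `X`. -/
def Qset : Set (Gp X) := closure (Set.range (fmap X))

lemma isCompact_Qset : IsCompact (Qset X) := by
  have hsub : Qset X ⊆ Set.univ.pi fun _ : Lam X => Icc (0:ℝ) 1 := by
    apply closure_minimal
    · rintro g ⟨x, rfl⟩ lam _
      exact lam.2.2 x
    · exact isClosed_set_pi fun lam _ => isClosed_Icc
  exact (isCompact_univ_pi fun _ => isCompact_Icc).of_isClosed_subset isClosed_closure hsub

lemma Qset_subset_QP : Qset X ⊆ QP X := by
  apply closure_minimal
  · rintro g ⟨x, rfl⟩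
    exact ⟨rfl, fun a b => rfl⟩
  · have h1 : IsClosed {g : Gp X | g 1 = 1} :=
      isClosed_eq (continuous_apply (1 : Lam X)) continuous_const
    have h2 : IsClosed {g : Gp X | ∀ a b : Lam X, g (a * b) = g a * g b} := by
      have he : {g : Gp X | ∀ a b : Lam X, g (a * b) = g a * g b} =
          ⋂ (a : Lam X) (b : Lam X), {g : Gp X | g (a * b) = g a * g b} := by
        ext g; simp
      rw [he]
      exact isClosed_iInter fun a => isClosed_iInter fun b =>
        isClosed_eq (continuous_apply _) ((continuous_apply a).mul (continuous_apply b))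
    exact (h1.inter h2)

/-- words of length at most `n` from `Q ∪ -Q` in the product group. -/
def Zs : ℕ → Set (Gp X)
  | 0 => {0}
  | n + 1 => Zs n ∪ (Zs n + (Qset X ∪ -Qset X))

lemma isCompact_Zs (n : ℕ) : IsCompact (Zs X n) := by
  induction n with
  | zero => exact isCompact_singleton
  | succ n ih =>
      exact ih.union (ih.add ((isCompact_Qset X).union (isCompact_Qset X).neg))

lemma isClosed_Zs (n : ℕ) : IsClosed (Zs X n) := (isCompact_Zs X n).isClosed

lemma Zs_mono_succ (n : ℕ) : Zs X n ⊆ Zs X (n + 1) := fun z hz => Or.inl hz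

lemma sum_mem_Zs : ∀ (n : ℕ) (L : List (Gp X)), L.length ≤ n → (∀ g ∈ L, g ∈ Qset X ∪ -Qset X) →
    L.sum ∈ Zs X n := by
  intro n
  induction n with
  | zero =>
      intro L hL _
      rw [List.length_eq_zero_iff.mp (Nat.le_zero.mp hL)]
      exact rfl
  | succ n ih =>
      intro L hL hmem
      cases L with
      | nil => exact Zs_mono_succ X n (ih [] (by simp) (by simp))
      | cons g t =>
          have ht : t.sum ∈ Zs X n := ih t (by simpa using Nat.succ_le_succ_iff.mp hL)
            (fun g' hg' => hmem g' (List.mem_cons_of_mem _ hg'))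
          have : g + t.sum ∈ Zs X n + (Qset X ∪ -Qset X) :=
            ⟨t.sum, ht, g, hmem g (List.mem_cons_self), by rw [add_comm]⟩
          rw [List.sum_cons]
          exact Or.inr this

lemma mem_Zs_elim : ∀ (n : ℕ) (z : Gp X), z ∈ Zs X n →
    ∃ L : List (Gp X × Bool), L.length ≤ n ∧ (∀ p ∈ L, p.1 ∈ Qset X) ∧
      z = (L.map fun p => if p.2 then p.1 else -p.1).sum := by
  intro n
  induction n with
  | zero =>
      intro z hz
      exact ⟨[], by simp, by simp, by simpa using Set.mem_singleton_iff.mp hz⟩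
  | succ n ih =>
      intro z hz
      rcases hz with hz | ⟨y, hy, q, hq, rfl⟩
      · obtain ⟨L, h1, h2, h3⟩ := ih z hz
        exact ⟨L, h1.trans (Nat.le_succ n), h2, h3⟩
      · obtain ⟨L, h1, h2, h3⟩ := ih y hy
        rcases hq with hq | hq
        · refine ⟨(q, true) :: L, by simpa using h1, ?_, ?_⟩
          · intro p hp
            rcases List.mem_cons.mp hp with rfl | hp
            · exact hq
            · exact h2 p hp
          · rw [List.map_cons, List.sum_cons, if_pos rfl, ← h3, add_comm]
        · refine ⟨(-q, false) :: L, by simpa using h1, ?_, ?_⟩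
          · intro p hp
            rcases List.mem_cons.mp hp with rfl | hp
            · simpa using hq
            · exact h2 p hp
          · rw [List.map_cons, List.sum_cons, if_neg (by simp), neg_neg, ← h3, add_comm]


section Words

variable {X : Type*} [TopologicalSpace X]

/-- The finsupp of coefficients associated to a word. -/
noncomputable def cList (l : List (X × Bool)) : X →₀ ℤ :=
  (l.map fun p => Finsupp.single p.1 (if p.2 then (1 : ℤ) else -1)).sum

/-- Evaluation of an integer finsupp against a family `u`. -/
def evc {B : Type*} [AddCommGroup B] (u : X → B) (c : X →₀ ℤ) : B :=
  c.sum fun x k => k • u x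

lemma evc_add {B : Type*} [AddCommGroup B] (u : X → B) (c d : X →₀ ℤ) :
    evc u (c + d) = evc u c + evc u d :=
  Finsupp.sum_add_index' (fun x => zero_smul ℤ (u x)) (fun x k k' => add_smul k k' (u x))

lemma evc_single {B : Type*} [AddCommGroup B] (u : X → B) (x : X) (k : ℤ) :
    evc u (Finsupp.single x k) = k • u x :=
  Finsupp.sum_single_index (zero_smul ℤ (u x))

lemma evc_cList {B : Type*} [AddCommGroup B] (u : X → B) (l : List (X × Bool)) :
    evc u (cList l) = (l.map fun p => if p.2 then u p.1 else -u p.1).sum := by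
  induction l with
  | nil => simp [cList, evc]
  | cons p t ih =>
      have h1 : cList (p :: t) = Finsupp.single p.1 (if p.2 then (1 : ℤ) else -1) + cList t := by
        rw [cList, List.map_cons, List.sum_cons]; rfl
      rw [h1, evc_add, evc_single, List.map_cons, List.sum_cons, ih]
      cases hb : p.2 <;> simp

/-- Real-coefficient evaluation in the product group. -/
noncomputable def evR (d : Gp X →₀ ℝ) : Gp X := d.sum fun g r => r • g

lemma evR_add (d d' : Gp X →₀ ℝ) : evR (d + d') = evR d + evR d' :=
  Finsupp.sum_add_index' (fun g => zero_smul ℝ g) (fun g r r' => add_smul r r' g)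

lemma evR_sub (d d' : Gp X →₀ ℝ) : evR (d - d') = evR d - evR d' :=
  Finsupp.sum_sub_index (fun g r r' => sub_smul r r' g)

lemma evR_list (L : List (Gp X × Bool)) :
    evR ((L.map fun p => Finsupp.single p.1 (if p.2 then (1 : ℝ) else -1)).sum) =
      (L.map fun p => if p.2 then p.1 else -p.1).sum := by
  induction L with
  | nil => simp [evR]
  | cons p t ih =>
      rw [List.map_cons, List.sum_cons, evR_add, List.map_cons, List.sum_cons, ih]
      have : evR (Finsupp.single p.1 (if p.2 then (1 : ℝ) else -1)) =
          (if p.2 then (1 : ℝ) else -1) • p.1 :=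
        Finsupp.sum_single_index (zero_smul ℝ p.1)
      rw [this]
      cases hb : p.2 <;> simp

lemma abs_list_single_apply (L : List (Gp X × Bool)) (g : Gp X) :
    |((L.map fun p => Finsupp.single p.1 (if p.2 then (1 : ℝ) else -1)).sum) g| ≤
      (L.countP (fun p => decide (p.1 = g)) : ℝ) := by
  classical
  induction L with
  | nil => simp
  | cons p t ih =>
      rw [List.map_cons, List.sum_cons, Finsupp.add_apply, List.countP_cons]
      have h1 : |(Finsupp.single p.1 (if p.2 then (1 : ℝ) else -1)) g| ≤
          (if decide (p.1 = g) then (1 : ℝ) else 0) := by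
        by_cases hpg : p.1 = g
        · cases hb : p.2 <;> simp [Finsupp.single_apply, hpg]
        · simp [Finsupp.single_apply, hpg]
      calc |(Finsupp.single p.1 (if p.2 then (1 : ℝ) else -1)) g +
            ((t.map fun p => Finsupp.single p.1 (if p.2 then (1 : ℝ) else -1)).sum) g|
          ≤ |(Finsupp.single p.1 (if p.2 then (1 : ℝ) else -1)) g| +
            |((t.map fun p => Finsupp.single p.1 (if p.2 then (1 : ℝ) else -1)).sum) g| :=
            abs_add_le _ _
        _ ≤ (if decide (p.1 = g) then (1 : ℝ) else 0) +
            (t.countP (fun p => decide (p.1 = g)) : ℝ) := add_le_add h1 ih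
        _ ≤ _ := by by_cases hpg : p.1 = g <;> push_cast <;> simp [hpg] <;> linarith

lemma list_single_support (L : List (Gp X × Bool)) (hQ : ∀ p ∈ L, p.1 ∈ Qset X) :
    ∀ g ∈ ((L.map fun p => Finsupp.single p.1 (if p.2 then (1 : ℝ) else -1)).sum).support,
      g ∈ Qset X := by
  classical
  induction L with
  | nil => simp
  | cons p t ih =>
      intro g hg
      rw [List.map_cons, List.sum_cons] at hg
      rcases Finset.mem_union.mp (Finsupp.support_add hg) with hg | hg
      · have := Finsupp.support_single_subset hg
        rw [Finset.mem_singleton] at this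
        exact this ▸ hQ p (List.mem_cons_self)
      · exact ih (fun q hq => hQ q (List.mem_cons_of_mem _ hq)) g hg

lemma sum_countP_le (hinj : Function.Injective (fmap X)) (s : Finset X)
    (L : List (Gp X × Bool)) :
    (∑ x ∈ s, L.countP (fun p => decide (p.1 = fmap X x))) ≤ L.length := by
  classical
  induction L with
  | nil => simp
  | cons p t ih =>
      simp only [List.countP_cons, List.length_cons, Finset.sum_add_distrib]
      have h1 : (∑ x ∈ s, if decide (p.1 = fmap X x) = true then 1 else 0) ≤ 1 := by
        have : (∑ x ∈ s, if decide (p.1 = fmap X x) = true then 1 else 0) =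
            (s.filter fun x => p.1 = fmap X x).card := by
          rw [Finset.card_filter]
          refine Finset.sum_congr rfl fun x _ => ?_
          simp
        rw [this]
        refine Finset.card_le_one.mpr fun a ha b hb => ?_
        have ha' := (Finset.mem_filter.mp ha).2
        have hb' := (Finset.mem_filter.mp hb).2
        exact hinj (ha' ▸ hb' ▸ rfl)
      omega

end Words

section Main

variable {X : Type*} [TopologicalSpace X] [T35Space X]
variable {A : Type*} [AddCommGroup A] (i : X → A)
variable (H : A →+ Gp X)

lemma H_evc (hH : ∀ x, H (i x) = fmap X x) (c : X →₀ ℤ) : H (evc i c) = evc (fmap X) c := by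
  rw [evc, map_finsuppSum]
  refine Finsupp.sum_congr fun x _ => ?_
  rw [map_zsmul, hH]

theorem wordsLe_eq_preimage (hH : ∀ x, H (i x) = fmap X x)
    (hgen : AddSubgroup.closure (Set.range i) = ⊤) (n : ℕ) : wordsLe i n = H ⁻¹' (Zs X n) := by
  classical
  apply Set.Subset.antisymm
  · rintro a ⟨l, hl, rfl⟩
    have hmap : H ((l.map fun p => if p.2 then i p.1 else -i p.1).sum) =
        (l.map fun p => if p.2 then fmap X p.1 else -fmap X p.1).sum := by
      rw [map_list_sum, List.map_map]
      congr 1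
      refine List.map_congr_left fun p _ => ?_
      cases hb : p.2 <;> simp [hb, map_neg, hH]
    refine Set.mem_preimage.mpr ?_
    rw [hmap]
    refine sum_mem_Zs X n _ (by simpa using hl) ?_
    intro g hg
    rw [List.mem_map] at hg
    obtain ⟨p, _, rfl⟩ := hg
    cases hb : p.2
    · simp only [hb, Bool.false_eq_true, if_false]
      refine Or.inr ?_
      rw [Set.mem_neg, neg_neg]
      exact subset_closure ⟨p.1, rfl⟩
    · simp only [hb, if_true]
      exact Or.inl (subset_closure ⟨p.1, rfl⟩)
  · intro a ha
    have hmem : a ∈ ⋃ m, wordsLe i m := by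
      rw [iUnion_wordsLe i hgen]; trivial
    obtain ⟨m, hm⟩ := mem_iUnion.mp hmem
    obtain ⟨l, hlm, rfl⟩ := hm
    set a := (l.map fun p => if p.2 then i p.1 else -i p.1).sum with ha_def
    set c : X →₀ ℤ := cList l with hc
    have hac : evc i c = a := evc_cList i l
    have hHa : H a = evc (fmap X) c := by rw [← hac, H_evc i H hH]
    obtain ⟨L, hLn, hLQ, hLsum⟩ := mem_Zs_elim X n (H a) ha
    -- the two finsupps
    set c' : X →₀ ℝ := Finsupp.mapRange (Int.cast : ℤ → ℝ) Int.cast_zero c with hc'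
    set A' : Gp X →₀ ℝ := Finsupp.mapDomain (fmap X) c' with hA'
    set B' : Gp X →₀ ℝ := (L.map fun p => Finsupp.single p.1 (if p.2 then (1 : ℝ) else -1)).sum
      with hB'
    have hevA : evR A' = H a := by
      rw [hA', evR, Finsupp.sum_mapDomain_index (fun g => zero_smul ℝ g)
        (fun g r r' => add_smul r r' g), hc',
        Finsupp.sum_mapRange_index (fun x => zero_smul ℝ (fmap X x)), hHa, evc]
      refine Finsupp.sum_congr fun x _ => ?_
      rw [Int.cast_smul_eq_zsmul]
    have hevB : evR B' = H a := by rw [hB', evR_list, hLsum]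
    have hD : A' - B' = 0 := by
      have hsupp : ∀ g ∈ (A' - B').support, g ∈ QP X := by
        intro g hg
        rcases Finset.mem_union.mp (Finsupp.support_sub hg) with hg | hg
        · have h1 := Finsupp.mapDomain_support hg
          obtain ⟨x, _, rfl⟩ := Finset.mem_image.mp h1
          exact Qset_subset_QP X (subset_closure ⟨x, rfl⟩)
        · exact Qset_subset_QP X (list_single_support L hLQ g hg)
      have hzero : ∑ g ∈ (A' - B').support, (A' - B') g • g = 0 := by
        have : evR (A' - B') = 0 := by rw [evR_sub, hevA, hevB, sub_self]
        rw [← this]; rfl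
      have hall := indep X hsupp _ hzero
      ext g
      by_cases hg : g ∈ (A' - B').support
      · exact hall g hg
      · simpa using Finsupp.notMem_support_iff.mp hg
    have hAB : A' = B' := sub_eq_zero.mp hD
    -- coefficient bound
    have hbound : ∀ x ∈ c.support, (c x).natAbs ≤ L.countP (fun p => decide (p.1 = fmap X x)) := by
      intro x _
      have h1 : A' (fmap X x) = (c x : ℝ) := by
        rw [hA', Finsupp.mapDomain_apply (fmap_injective X), hc', Finsupp.mapRange_apply]
      have h2 : |B' (fmap X x)| ≤ (L.countP (fun p => decide (p.1 = fmap X x)) : ℝ) :=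
        abs_list_single_apply L (fmap X x)
      rw [← hAB, h1] at h2
      have : ((c x).natAbs : ℝ) ≤ (L.countP (fun p => decide (p.1 = fmap X x)) : ℝ) := by
        rw [Nat.cast_natAbs, Int.cast_abs]
        exact h2
      exact_mod_cast this
    have hlen : (∑ x ∈ c.support, (c x).natAbs) ≤ n := by
      calc (∑ x ∈ c.support, (c x).natAbs)
          ≤ ∑ x ∈ c.support, L.countP (fun p => decide (p.1 = fmap X x)) :=
            Finset.sum_le_sum hbound
        _ ≤ L.length := sum_countP_le (fmap_injective X) c.support L
        _ ≤ n := hLn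
    have : a ∈ wordsLe i (∑ x ∈ c.support, (c x).natAbs) := by
      rw [← hac, evc, Finsupp.sum]
      exact sum_mem_wordsLe i c.support c
    exact wordsLe_mono i hlen this

end Main

section Pasting

variable {α β : Type*} [TopologicalSpace α] [TopologicalSpace β]

lemma continuousOn_union_of_isClosed {g : α → β} {s t : Set α} (hs : IsClosed s)
    (ht : IsClosed t) (hgs : ContinuousOn g s) (hgt : ContinuousOn g t) :
    ContinuousOn g (s ∪ t) := by
  intro x hx
  rcases hx with hx | hx
  · by_cases hxt : x ∈ t
    · exact (hgs x hx).union (hgt x hxt)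
    · exact (hgs x hx).union
        (continuousWithinAt_of_notMem_closure (by rwa [ht.closure_eq]))
  · by_cases hxs : x ∈ s
    · exact (hgs x hxs).union (hgt x hx)
    · exact (continuousWithinAt_of_notMem_closure (by rwa [hs.closure_eq])).union (hgt x hx)

end Pasting

end
end FKR

/-- If every compact subset of `A(X)` lies in some `A_n(X)`, each `A_n(X)` is a normal
`k`-space, and `A(X)` is a `k_R`-space, then `A(X)` is a `k`-space. -/
theorem free_abelian_kR_implies_k (X : Type*) [TopologicalSpace X] [T35Space X]
    (A : Type*) [AddCommGroup A] [TopologicalSpace A] [IsTopologicalAddGroup A]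
    (i : X → A) (hfree : IsFreeAbelianTopGroup X A i)
    (hcomp : ∀ K : Set A, IsCompact K → ∃ n : ℕ, K ⊆ wordsLe i n)
    (hnormal : ∀ n : ℕ, NormalSpace ↥(wordsLe i n))
    (hk : ∀ n : ℕ, IsKSpace ↥(wordsLe i n))
    (hkR : IsKRSpace A) :
    IsKSpace A := by
  classical
  -- Step 1: construct the continuous character homomorphism `H : A →+ Gp X`.
  obtain ⟨H, hHc, hH⟩ : ∃ H : A →+ FKR.Gp X, Continuous H ∧ ∀ x, H (i x) = FKR.fmap X x := by
    have hlift : ∀ lam : FKR.Lam X, ∃ h : A →+ ULift ℝ,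
        Continuous h ∧ ∀ x, h (i x) = ULift.up (lam.1 x) := fun lam =>
      hfree.lift (ULift ℝ) (fun x => ULift.up (lam.1 x)) (continuous_uliftUp.comp lam.2.1)
    choose h hc hx using hlift
    refine ⟨{ toFun := fun a lam => (h lam a).down
              map_zero' := by
                funext lam
                show ((h lam) 0).down = 0
                rw [map_zero]
                rfl
              map_add' := by
                intro a b
                funext lam
                show ((h lam) (a + b)).down = ((h lam) a).down + ((h lam) b).down
                rw [map_add]
                rfl }, ?_, ?_⟩
    · exact continuous_pi fun lam => continuous_uliftDown.comp (hc lam)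
    · intro x; funext lam
      show (h lam (i x)).down = FKR.fmap X x lam
      rw [hx lam x]; rfl
  -- Step 2: each `wordsLe i n` is closed.
  have hWclosed : ∀ n : ℕ, IsClosed (wordsLe i n) := fun n => by
    rw [FKR.wordsLe_eq_preimage i H hH hfree.generates n]
    exact (FKR.isClosed_Zs X n).preimage hHc
  -- Step 3: `H` is injective, hence `A` is T1.
  have hinj : Function.Injective H := by
    intro a b hab
    have h0 : a - b ∈ wordsLe i 0 := by
      rw [FKR.wordsLe_eq_preimage i H hH hfree.generates 0]
      show H (a - b) ∈ ({0} : Set (FKR.Gp X))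
      rw [map_sub, hab, sub_self]
      rfl
    obtain ⟨l, hl, hsum⟩ := h0
    rw [List.length_eq_zero_iff.mp (Nat.le_zero.mp hl)] at hsum
    simp only [List.map_nil, List.sum_nil] at hsum
    exact sub_eq_zero.mp hsum
  haveI hT1 : T1Space A := by
    constructor
    intro a
    have : ({a} : Set A) = H ⁻¹' {H a} := by
      ext b
      simp only [Set.mem_singleton_iff, Set.mem_preimage]
      exact ⟨fun h => by rw [h], fun h => hinj h⟩
    rw [this]
    exact isClosed_singleton.preimage hHc
  -- Step 4: traces of a compactly-closed set on each `wordsLe i m` are closed.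
  intro C hC
  have hD : ∀ m : ℕ, IsClosed ((fun y : ↥(wordsLe i m) => (y : A)) ⁻¹' C) := by
    intro m
    apply hk m
    intro K hK
    have hKA : IsCompact (Subtype.val '' K) := hK.image continuous_subtype_val
    have h1 := hC _ hKA
    let θ : K → ↥(Subtype.val '' K) := fun y => ⟨y.1.1, ⟨y.1, y.2, rfl⟩⟩
    have hθ : Continuous θ :=
      Continuous.subtype_mk (continuous_subtype_val.comp continuous_subtype_val) _
    exact h1.preimage hθ
  -- Step 5: show `closure C ⊆ C`.
  refine isClosed_of_closure_subset fun a hacl => ?_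
  by_contra haC
  -- `a` lies in some `wordsLe i N`.
  have haU : a ∈ ⋃ n, wordsLe i n := by
    rw [FKR.iUnion_wordsLe i hfree.generates]; trivial
  obtain ⟨N, haN⟩ := mem_iUnion.mp haU
  -- Base function on `wordsLe i N` via Urysohn.
  haveI := hnormal N
  have hdisj : Disjoint ((fun y : ↥(wordsLe i N) => (y : A)) ⁻¹' C)
      ({(⟨a, haN⟩ : ↥(wordsLe i N))} : Set ↥(wordsLe i N)) := by
    rw [Set.disjoint_right]
    rintro y hy
    rw [Set.mem_singleton_iff] at hy
    subst hy
    exact fun h => haC h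
  obtain ⟨u, hu0, hu1, _⟩ :=
    exists_continuous_zero_one_of_isClosed (hD N) isClosed_singleton hdisj
  -- Inductive step: extension from `wordsLe i m` to `wordsLe i (m+1)`.
  have stepex : ∀ (m : ℕ)
      (f : {f : ↥(wordsLe i m) → ℝ // Continuous f ∧ ∀ y : ↥(wordsLe i m), (y : A) ∈ C → f y = 0}),
      ∃ g : {g : ↥(wordsLe i (m+1)) → ℝ //
          Continuous g ∧ ∀ y : ↥(wordsLe i (m+1)), (y : A) ∈ C → g y = 0},
        ∀ (x : A) (h1 : x ∈ wordsLe i m) (h2 : x ∈ wordsLe i (m+1)),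
          g.1 ⟨x, h2⟩ = f.1 ⟨x, h1⟩ := by
    intro m f
    haveI := hnormal (m+1)
    set S1 : Set ↥(wordsLe i (m+1)) := (fun y : ↥(wordsLe i (m+1)) => (y : A)) ⁻¹' wordsLe i m
      with hS1def
    set S2 : Set ↥(wordsLe i (m+1)) := (fun y : ↥(wordsLe i (m+1)) => (y : A)) ⁻¹' C with hS2def
    have hS1 : IsClosed S1 := (hWclosed m).preimage continuous_subtype_val
    have hS2 : IsClosed S2 := hD (m+1)
    have hS : IsClosed (S1 ∪ S2) := hS1.union hS2
    set g0 : ↥(wordsLe i (m+1)) → ℝ :=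
      fun y => if h : (y : A) ∈ wordsLe i m then f.1 ⟨y, h⟩ else 0 with hg0def
    have c1 : ContinuousOn g0 S1 := by
      rw [continuousOn_iff_continuous_restrict]
      have : S1.domRestrict g0 =
          f.1 ∘ (fun y : ↥S1 => (⟨(y : ↥(wordsLe i (m+1))).1, y.2⟩ : ↥(wordsLe i m))) :=
        funext fun y => dif_pos y.2
      rw [this]
      exact f.2.1.comp (Continuous.subtype_mk (continuous_subtype_val.comp continuous_subtype_val) _)
    have c2 : ContinuousOn g0 S2 := by
      refine ContinuousOn.congr (continuousOn_const (c := (0 : ℝ))) ?_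
      intro y hy
      show g0 y = 0
      by_cases h : (y : A) ∈ wordsLe i m
      · rw [hg0def]
        simp only [dif_pos h]
        exact f.2.2 ⟨y, h⟩ hy
      · rw [hg0def]
        simp only [dif_neg h]
    have hg0S : ContinuousOn g0 (S1 ∪ S2) :=
      FKR.continuousOn_union_of_isClosed hS1 hS2 c1 c2
    obtain ⟨G, hG⟩ := ContinuousMap.exists_restrict_eq hS
      ⟨(S1 ∪ S2).restrict g0, continuousOn_iff_continuous_restrict.mp hg0S⟩
    have hGS : ∀ (y : ↥(wordsLe i (m+1))) (hy : y ∈ S1 ∪ S2), G y = g0 y := fun y hy =>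
      DFunLike.congr_fun hG (⟨y, hy⟩ : ↥(S1 ∪ S2))
    refine ⟨⟨⇑G, G.continuous, ?_⟩, ?_⟩
    · intro y hyC
      rw [hGS y (Or.inr hyC)]
      by_cases h : (y : A) ∈ wordsLe i m
      · rw [hg0def]; simp only [dif_pos h]; exact f.2.2 ⟨y, h⟩ hyC
      · rw [hg0def]; simp only [dif_neg h]
    · intro x h1 h2
      show G ⟨x, h2⟩ = f.1 ⟨x, h1⟩
      rw [hGS ⟨x, h2⟩ (Or.inl h1), hg0def]
      exact dif_pos h1
  choose stepf hstep using stepex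
  -- The chain of functions.
  let chain : ∀ k : ℕ, {f : ↥(wordsLe i (N + k)) → ℝ //
      Continuous f ∧ ∀ y : ↥(wordsLe i (N + k)), (y : A) ∈ C → f y = 0} :=
    fun k => Nat.rec (⟨⇑u, u.continuous, fun y hy => hu0 hy⟩) (fun k fk => stepf (N + k) fk) k
  have chain_succ : ∀ (k : ℕ) (x : A) (h1 : x ∈ wordsLe i (N + k))
      (h2 : x ∈ wordsLe i (N + (k+1))), (chain (k+1)).1 ⟨x, h2⟩ = (chain k).1 ⟨x, h1⟩ :=
    fun k => hstep (N + k) (chain k)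
  have agree : ∀ k j, k ≤ j → ∀ (x : A) (h1 : x ∈ wordsLe i (N + k))
      (h2 : x ∈ wordsLe i (N + j)), (chain j).1 ⟨x, h2⟩ = (chain k).1 ⟨x, h1⟩ := by
    intro k j hkj
    induction j, hkj using Nat.le_induction with
    | base => intro x h1 h2; rfl
    | succ j hkj ih =>
        intro x h1 h2
        have hmid : x ∈ wordsLe i (N + j) :=
          FKR.wordsLe_mono i (by omega) h1
        exact (chain_succ j x hmid h2).trans (ih x h1 hmid)
  have hex : ∀ b : A, ∃ k : ℕ, b ∈ wordsLe i (N + k) := by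
    intro b
    have hbU : b ∈ ⋃ n, wordsLe i n := by
      rw [FKR.iUnion_wordsLe i hfree.generates]; trivial
    obtain ⟨m, hm⟩ := mem_iUnion.mp hbU
    exact ⟨m, FKR.wordsLe_mono i (by omega) hm⟩
  let F : A → ℝ := fun b => (chain (Nat.find (hex b))).1 ⟨b, Nat.find_spec (hex b)⟩
  have F_eq : ∀ (k : ℕ) (b : A) (h : b ∈ wordsLe i (N + k)), F b = (chain k).1 ⟨b, h⟩ := by
    intro k b h
    rcases le_total (Nat.find (hex b)) k with hle | hle
    · exact (agree _ k hle b (Nat.find_spec (hex b)) h).symm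
    · exact agree k _ hle b h (Nat.find_spec (hex b))
  have hFa : F a = 1 := by
    have h0 : a ∈ wordsLe i (N + 0) := haN
    rw [F_eq 0 a h0]
    have : (chain 0).1 ⟨a, h0⟩ = u ⟨a, h0⟩ := rfl
    rw [this]
    exact hu1 rfl
  have hF0 : ∀ b ∈ C, F b = 0 := by
    intro b hb
    obtain ⟨k, hk'⟩ := hex b
    rw [F_eq k b hk']
    exact (chain k).2.2 ⟨b, hk'⟩ hb
  have hFcont : Continuous F := by
    apply hkR
    intro K hK
    obtain ⟨m, hKm⟩ := hcomp K hK
    have hsub : K ⊆ wordsLe i (N + m) := hKm.trans (FKR.wordsLe_mono i (by omega))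
    rw [continuousOn_iff_continuous_restrict]
    have : K.domRestrict F =
        (chain m).1 ∘ (fun y : K => (⟨y.1, hsub y.2⟩ : ↥(wordsLe i (N + m)))) :=
      funext fun y => F_eq m y.1 (hsub y.2)
    rw [this]
    exact (chain m).2.1.comp (Continuous.subtype_mk continuous_subtype_val _)
  have : closure C ⊆ F ⁻¹' {0} :=
    closure_minimal (fun b hb => hF0 b hb) (isClosed_singleton.preimage hFcont)
  have : F a = 0 := this hacl
  rw [hFa] at this
  exact one_ne_zero this
end
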